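/- Let A : X → Y and B, C : Y → X satisfy A(BA)² = ABACA = ACABA = (AC)²A, and let S ∈ L(Y) commute with AC and satisfy S(AC)S = S. Set P = S(AC) − I. Then (PA)B(PA)B(PA) = (PA)B(PA)C(PA) = (PA)C(PA)B(PA) = (PA)C(PA)C(PA); in other words, the operators A' = PA, B' = B, C' = C satisfy A'(B'A')² = A'B'A'C'A' = A'C'A'B'A' = (A'C')²A'. -/

import Mathlib

open Polynomial ContinuousLinearMap

variable {X Y : Type*} [NormedAddCommGroup X] [NormedSpace ℂ X] [CompleteSpace X]
  [NormedAddCommGroup Y] [NormedSpace ℂ Y] [CompleteSpace Y]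
theorem stmt16 (A : X →L[ℂ] Y) (B C : Y →L[ℂ] X)
    (h1 : A ∘L B ∘L A ∘L B ∘L A = A ∘L B ∘L A ∘L C ∘L A)
    (h2 : A ∘L B ∘L A ∘L C ∘L A = A ∘L C ∘L A ∘L B ∘L A)
    (h3 : A ∘L C ∘L A ∘L B ∘L A = A ∘L C ∘L A ∘L C ∘L A) (S : Y →L[ℂ] Y)
    (hS1 : S ∘L (A ∘L C) = (A ∘L C) ∘L S)
    (hS2 : S ∘L (A ∘L C) ∘L S = S)
    (P : Y →L[ℂ] Y) (hP : P = S ∘L (A ∘L C) - 1) :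
    (P ∘L A) ∘L B ∘L (P ∘L A) ∘L B ∘L (P ∘L A) =
        (P ∘L A) ∘L B ∘L (P ∘L A) ∘L C ∘L (P ∘L A) ∧
    (P ∘L A) ∘L B ∘L (P ∘L A) ∘L C ∘L (P ∘L A) =
        (P ∘L A) ∘L C ∘L (P ∘L A) ∘L B ∘L (P ∘L A) ∧
    (P ∘L A) ∘L C ∘L (P ∘L A) ∘L B ∘L (P ∘L A) =
        (P ∘L A) ∘L C ∘L (P ∘L A) ∘L C ∘L (P ∘L A) := by
  subst hP
  have hBB := h1.trans (h2.trans h3)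
  have hBC := h2.trans h3
  have pBB : ∀ x, A (B (A (B (A x)))) = A (C (A (C (A x)))) := fun x => by
    simpa using DFunLike.congr_fun hBB x
  have pBC : ∀ x, A (B (A (C (A x)))) = A (C (A (C (A x)))) := fun x => by
    simpa using DFunLike.congr_fun hBC x
  have pCB : ∀ x, A (C (A (B (A x)))) = A (C (A (C (A x)))) := fun x => by
    simpa using DFunLike.congr_fun h3 x
  have pS1 : ∀ x, S (A (C x)) = A (C (S x)) := fun x => by
    simpa using DFunLike.congr_fun hS1 x
  have pS2 : ∀ x, S (A (C (S x))) = S x := fun x => by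
    simpa using DFunLike.congr_fun hS2 x
  refine ⟨?_, ?_, ?_⟩ <;>
  · ext x
    simp only [comp_apply, sub_apply, ContinuousLinearMap.one_apply, map_sub, pS1, pS2, pBB, pBC, pCB]
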